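/- Let s be a prime power with s ≡ 3 (mod 7) and s > 3, and let T = {0} ∪ ⋃_{j=1}^{s-2} [js-(j-1), js] ∪ {n : n ≥ s²-2s+2}. Then the positive elements of T that are ≤ 7s and divisible by 7 are exactly 3s-2, 5s-1, 6s-4, and 7s; hence their count is 4. -/
import Mathlib


/-- T = {0} ∪ ⋃_{j=1}^{s-2} [js-(j-1), js] ∪ {n : n ≥ s²-2s+2}. -/
def hermTset (s : ℕ) : Set ℕ :=
  {0} ∪ (⋃ j ∈ Finset.Icc 1 (s - 2), Set.Icc (j * s - (j - 1)) (j * s))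
    ∪ {n : ℕ | s ^ 2 - 2 * s + 2 ≤ n}

/-- for s a prime power with s ≡ 3 (mod 7) and s > 3, the positive
elements of T that are ≤ 7s and divisible by 7 are exactly 3s-2, 5s-1, 6s-4, 7s;
hence there are 4 of them. -/
theorem stmt14 (s : ℕ) (hpp : ∃ p k : ℕ, Nat.Prime p ∧ 0 < k ∧ s = p ^ k)
    (h7 : s % 7 = 3) (h3 : 3 < s) :
    {n : ℕ | n ∈ hermTset s ∧ 0 < n ∧ n ≤ 7 * s ∧ 7 ∣ n}
        = ({3 * s - 2, 5 * s - 1, 6 * s - 4, 7 * s} : Set ℕ) ∧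
    {n : ℕ | n ∈ hermTset s ∧ 0 < n ∧ n ≤ 7 * s ∧ 7 ∣ n}.ncard = 4 := by
  have hs10 : 10 ≤ s := by omega
  have hss : 10 * s ≤ s * s := Nat.mul_le_mul_right s hs10
  have heq : {n : ℕ | n ∈ hermTset s ∧ 0 < n ∧ n ≤ 7 * s ∧ 7 ∣ n}
      = ({3 * s - 2, 5 * s - 1, 6 * s - 4, 7 * s} : Set ℕ) := by
    ext n
    simp only [hermTset, Set.mem_setOf_eq, Set.mem_union, Set.mem_singleton_iff,
      Set.mem_iUnion, Finset.mem_Icc, Set.mem_Icc, Set.mem_insert_iff, exists_prop]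
    constructor
    · rintro ⟨(h0 | ⟨j, ⟨hj1, hj2⟩, hjn1, hjn2⟩) | htail, hpos, hle, hdvd⟩
      · omega
      · have hjs : j * s < 8 * s := by
          have : j - 1 < s := by omega
          omega
        have hj7 : j < 8 := Nat.lt_of_mul_lt_mul_right hjs
        interval_cases j <;> omega
      · exfalso
        have : s ^ 2 = s * s := sq s
        omega
    · have hsq : s ^ 2 = s * s := sq s
      rintro (rfl | rfl | rfl | rfl)
      · exact ⟨Or.inl (Or.inr ⟨3, by omega, by omega, by omega⟩), by omega, by omega, by omega⟩
      · exact ⟨Or.inl (Or.inr ⟨5, by omega, by omega, by omega⟩), by omega, by omega, by omega⟩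
      · exact ⟨Or.inl (Or.inr ⟨6, by omega, by omega, by omega⟩), by omega, by omega, by omega⟩
      · exact ⟨Or.inl (Or.inr ⟨7, by omega, by omega, by omega⟩), by omega, by omega, by omega⟩
  refine ⟨heq, ?_⟩
  rw [heq]
  have : ({3 * s - 2, 5 * s - 1, 6 * s - 4, 7 * s} : Set ℕ)
      = (({3 * s - 2, 5 * s - 1, 6 * s - 4, 7 * s} : Finset ℕ) : Set ℕ) := by
    simp
  rw [this, Set.ncard_coe_finset]
  rw [Finset.card_insert_of_notMem (by simp; omega),
    Finset.card_insert_of_notMem (by simp; omega),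
    Finset.card_insert_of_notMem (by simp; omega), Finset.card_singleton]
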